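/- For all x > 0 and s > 0, the integral ∫₀^∞ exp(-s·cosh(x)) dx is bounded above by 1 + |ln(1 - e^{-s})|. -/

import Mathlib

open MeasureTheory Real Set Filter Topology

private lemma aux_key (s L : ℝ) (hs : 0 < s) (hs2 : s ≤ 1/2) (hL : (0.6931471803:ℝ) ≤ L) :
    (L + s) / (1 + s) + 0.8454 ≤ 1 + L := by
  rw [div_add' _ _ _ (by positivity : (1:ℝ)+s ≠ 0),
    div_le_iff₀ (by positivity : (0:ℝ) < 1+s)]
  nlinarith [mul_le_mul_of_nonneg_right hL hs.le]

private lemma aux_B (x y s : ℝ) (hs : 0 < s) (e1 : x^2 = 1/4 + s^2) (e2 : y^2 = 1 + s^2)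
    (hx : 1/2 ≤ x) (hy : 0 < y) : y ≤ x + 1/2 := by
  nlinarith [hx, hy, e1, e2]

private lemma aux_q (E EB u : ℝ) (hE : 0 < E) (hEA : E ≤ u) (hu : u ≤ 1)
    (hEB : E * u ≤ EB) : 2 * E - EB ≤ 2 * u - u^2 := by
  nlinarith [mul_nonneg (sub_nonneg.mpr hEA) (by linarith : (0:ℝ) ≤ 2 - u)]

private lemma aux_unum : Real.exp (-(1/2) : ℝ) ≤ 0.6067 := by
  have h1 : Real.exp (1/2:ℝ) * Real.exp (1/2:ℝ) = Real.exp 1 := by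
    rw [← Real.exp_add]; norm_num
  have h2 : (2.7182818283:ℝ) < Real.exp 1 := Real.exp_one_gt_d9
  have h3 : (1.6485:ℝ) ≤ Real.exp (1/2:ℝ) := by
    nlinarith [Real.exp_pos (1/2:ℝ)]
  have h5 : Real.exp (-(1/2):ℝ) * Real.exp ((1/2):ℝ) = 1 := by
    rw [← Real.exp_add]; norm_num
  nlinarith [mul_nonneg (Real.exp_pos (-(1/2):ℝ)).le (sub_nonneg.mpr h3)]

private lemma aux_qnum (u : ℝ) (h0 : 0 ≤ u) (h : u ≤ 0.6067) : 2 * u - u^2 ≤ 0.8454 := by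
  nlinarith [sq_nonneg (u - 0.6067)]

set_option maxHeartbeats 1000000 in
/-- For all `s > 0`, `∫₀^∞ exp (-s * cosh x) dx ≤ 1 + |ln (1 - e^{-s})|`. -/
theorem stmt_0 (s : ℝ) (hs : 0 < s) :
    ∫ x in Set.Ioi (0 : ℝ), Real.exp (-s * Real.cosh x) ≤
      1 + |Real.log (1 - Real.exp (-s))| := by
  set f : ℝ → ℝ := fun x => Real.exp (-s * Real.cosh x) with hfdef
  set g : ℝ → ℝ := fun x => Real.sinh x * Real.exp (-s * Real.cosh x) with hgdef
  set F : ℝ → ℝ := fun x => -(1/s) * Real.exp (-s * Real.cosh x) with hFdef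
  have hcf : Continuous f := Real.continuous_exp.comp (continuous_const.mul Real.continuous_cosh)
  have hcg : Continuous g := Real.continuous_sinh.mul hcf
  have hderiv : ∀ x : ℝ, HasDerivAt F (g x) x := by
    intro x
    have h1 : HasDerivAt (fun y : ℝ => -s * Real.cosh y) (-s * Real.sinh x) x :=
      (Real.hasDerivAt_cosh x).const_mul (-s)
    have h2 := h1.exp.const_mul (-(1/s))
    refine h2.congr_deriv ?_
    rw [hgdef]
    field_simp
  set c : ℝ := Real.arsinh (1/(2*s)) with hcdef
  set c' : ℝ := Real.arsinh (1/s) with hc'def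
  have hsc : Real.sinh c = 1/(2*s) := Real.sinh_arsinh _
  have hsc' : Real.sinh c' = 1/s := Real.sinh_arsinh _
  have hcpos : 0 < c := Real.arsinh_pos_iff.mpr (by positivity)
  have hcc' : c < c' := by
    apply Real.arsinh_lt_arsinh.mpr
    rw [div_lt_div_iff₀ (by positivity) hs]
    nlinarith
  -- limit of F at infinity
  have hFlim : Tendsto F atTop (𝓝 0) := by
    have hexp : Tendsto (fun x : ℝ => Real.exp (-s * Real.cosh x)) atTop (𝓝 0) := by
      apply squeeze_zero (fun x => (Real.exp_pos _).le)
        (g := fun x : ℝ => Real.exp (-s/2 * (1 + x)))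
      · intro x
        apply Real.exp_le_exp.mpr
        have h1 : x + 1 ≤ Real.exp x := Real.add_one_le_exp x
        have h2 : 0 < Real.exp (-x) := Real.exp_pos _
        have h3 : Real.cosh x = (Real.exp x + Real.exp (-x)) / 2 := Real.cosh_eq x
        nlinarith
      · apply Real.tendsto_exp_atBot.comp
        apply Filter.Tendsto.const_mul_atTop_of_neg (show -s/2 < 0 by linarith)
        exact tendsto_atTop_add_const_left _ 1 tendsto_id
    have h := hexp.const_mul (-(1/s))
    rw [mul_zero] at h
    exact h
  have hg_nonneg : ∀ x ∈ Ioi c', 0 ≤ g x := by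
    intro x hx
    have hx0 : 0 ≤ x := le_of_lt (lt_trans (hcpos.trans hcc') hx)
    exact mul_nonneg (Real.sinh_nonneg_iff.mpr hx0) (Real.exp_pos _).le
  have hintg : IntegrableOn g (Set.Ioi c') :=
    integrableOn_Ioi_deriv_of_nonneg' (fun x _ => hderiv x) hg_nonneg hFlim
  have hIg : ∫ x in Ioi c', g x = (1/s) * Real.exp (-s * Real.cosh c') := by
    rw [integral_Ioi_of_hasDerivAt_of_nonneg' (fun x _ => hderiv x) hg_nonneg hFlim]
    simp only [hFdef]
    ring
  -- tail pointwise bound and integrability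
  have hfg3 : ∀ x ∈ Ioi c', f x ≤ s * g x := by
    intro x hx
    have hsinh : 1/s ≤ Real.sinh x := by
      rw [← hsc']; exact Real.sinh_le_sinh.mpr (le_of_lt hx)
    have hE : 0 < Real.exp (-s * Real.cosh x) := Real.exp_pos _
    have h1 : 1 ≤ s * Real.sinh x := by
      have := mul_le_mul_of_nonneg_left hsinh hs.le
      rwa [mul_one_div, div_self hs.ne'] at this
    simp only [hfdef, hgdef]
    nlinarith
  have hintf3 : IntegrableOn f (Set.Ioi c') := by
    refine (hintg.const_mul s).mono' hcf.aestronglyMeasurable.restrict ?_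
    refine (ae_restrict_iff' measurableSet_Ioi).mpr (Filter.Eventually.of_forall ?_)
    intro x hx
    rw [Real.norm_eq_abs, abs_of_pos (Real.exp_pos _)]
    exact hfg3 x hx
  have hbound3 : ∫ x in Ioi c', f x ≤ Real.exp (-s * Real.cosh c') := by
    calc ∫ x in Ioi c', f x ≤ ∫ x in Ioi c', s * g x :=
          setIntegral_mono_on hintf3 (hintg.const_mul s) measurableSet_Ioi hfg3
      _ = s * ∫ x in Ioi c', g x := integral_const_mul _ _
      _ = Real.exp (-s * Real.cosh c') := by rw [hIg]; field_simp
  -- middle piece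
  have hmid : ∫ x in Ioc c c', g x
      = (1/s) * Real.exp (-s * Real.cosh c) - (1/s) * Real.exp (-s * Real.cosh c') := by
    rw [← intervalIntegral.integral_of_le hcc'.le,
      intervalIntegral.integral_eq_sub_of_hasDerivAt (fun x _ => hderiv x)
        (hcg.intervalIntegrable _ _)]
    simp only [hFdef]
    ring
  have hfg2 : ∀ x ∈ Ioc c c', f x ≤ 2 * s * g x := by
    intro x hx
    have hsinh : 1/(2*s) ≤ Real.sinh x := by
      rw [← hsc]; exact Real.sinh_le_sinh.mpr (le_of_lt hx.1)
    have hE : 0 < Real.exp (-s * Real.cosh x) := Real.exp_pos _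
    have h1 : 1 ≤ 2 * s * Real.sinh x := by
      have := mul_le_mul_of_nonneg_left hsinh (by positivity : (0:ℝ) ≤ 2*s)
      rwa [mul_one_div, div_self (by positivity : (2*s) ≠ 0)] at this
    simp only [hfdef, hgdef]
    nlinarith
  have hintf2 : IntegrableOn f (Set.Ioc c c') := hcf.integrableOn_Ioc
  have hintg2 : IntegrableOn (fun x => 2 * s * g x) (Set.Ioc c c') :=
    (continuous_const.mul hcg).integrableOn_Ioc
  have hbound2 : ∫ x in Ioc c c', f x
      ≤ 2 * Real.exp (-s * Real.cosh c) - 2 * Real.exp (-s * Real.cosh c') := by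
    calc ∫ x in Ioc c c', f x ≤ ∫ x in Ioc c c', 2 * s * g x :=
          setIntegral_mono_on hintf2 hintg2 measurableSet_Ioc hfg2
      _ = 2 * s * ∫ x in Ioc c c', g x := integral_const_mul _ _
      _ = 2 * Real.exp (-s * Real.cosh c) - 2 * Real.exp (-s * Real.cosh c') := by
          rw [hmid]; field_simp
  -- first piece
  have hintf1 : IntegrableOn f (Set.Ioc 0 c) := hcf.integrableOn_Ioc
  have hbound1 : ∫ x in Ioc 0 c, f x ≤ c * Real.exp (-s) := by
    have hfg1 : ∀ x ∈ Ioc (0:ℝ) c, f x ≤ Real.exp (-s) := by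
      intro x hx
      apply Real.exp_le_exp.mpr
      nlinarith [Real.one_le_cosh x]
    calc ∫ x in Ioc 0 c, f x ≤ ∫ _x in Ioc (0:ℝ) c, Real.exp (-s) :=
          setIntegral_mono_on hintf1 (continuous_const.integrableOn_Ioc) measurableSet_Ioc hfg1
      _ = c * Real.exp (-s) := by
          rw [setIntegral_const]
          rw [Real.volume_real_Ioc_of_le hcpos.le]
          simp [smul_eq_mul]
  -- splitting
  have hsplit2 : ∫ x in Ioc 0 c', f x = (∫ x in Ioc 0 c, f x) + ∫ x in Ioc c c', f x := by
    rw [← setIntegral_union (Set.Ioc_disjoint_Ioc_of_le le_rfl) measurableSet_Ioc hintf1 hintf2,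
      Set.Ioc_union_Ioc_eq_Ioc hcpos.le hcc'.le]
  have hintf12 : IntegrableOn f (Set.Ioc 0 c') := hcf.integrableOn_Ioc
  have hsplit1 : ∫ x in Ioi (0:ℝ), f x = (∫ x in Ioc 0 c', f x) + ∫ x in Ioi c', f x := by
    rw [← setIntegral_union (Set.Ioc_disjoint_Ioi le_rfl) measurableSet_Ioi hintf12 hintf3,
      Set.Ioc_union_Ioi_eq_Ioi (hcpos.trans hcc').le]
  -- basic facts about the right-hand side
  have hexps : Real.exp (-s) < 1 := by
    have := Real.exp_lt_exp.mpr (show -s < 0 by linarith)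
    simpa using this
  have hden : 0 < 1 - Real.exp (-s) := by linarith
  have habs : |Real.log (1 - Real.exp (-s))| = - Real.log (1 - Real.exp (-s)) :=
    abs_of_nonpos (Real.log_nonpos hden.le (by nlinarith [Real.exp_pos (-s)]))
  set a : ℝ := - Real.log (1 - Real.exp (-s)) with hadef
  have he_a : Real.exp (-s) ≤ a := by
    have h1 : Real.log (1 - Real.exp (-s)) ≤ Real.log (Real.exp (-Real.exp (-s))) := by
      apply (Real.log_le_log_iff hden (Real.exp_pos _)).mpr
      have := Real.add_one_le_exp (-(Real.exp (-s)))
      linarith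
    rw [Real.log_exp] at h1
    rw [hadef]
    linarith
  set L : ℝ := - Real.log s with hLdef
  have hLa : L ≤ a := by
    have h1 : 1 - Real.exp (-s) ≤ s := by
      have := Real.add_one_le_exp (-s)
      linarith
    have h2 : Real.log (1 - Real.exp (-s)) ≤ Real.log s :=
      (Real.log_le_log_iff hden hs).mpr h1
    rw [hadef, hLdef]
    linarith
  -- bound on c
  have hcle : c ≤ Real.log ((1+s)/s) := by
    have h1s : (0:ℝ) < (1+s)/s := by positivity
    apply Real.sinh_le_sinh.mp
    rw [hsc, Real.sinh_log h1s]
    have hinv : ((1+s)/s)⁻¹ = s/(1+s) := by rw [inv_div]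
    rw [hinv]
    have heq : ((1+s)/s - s/(1+s))/2 = (1+2*s)/(2*s*(1+s)) := by
      field_simp
      ring
    rw [heq, div_le_div_iff₀ (by positivity) (by positivity)]
    nlinarith
  have hcLs : c ≤ L + s := by
    have hlogd : Real.log ((1+s)/s) = Real.log (1+s) - Real.log s :=
      Real.log_div (by positivity) hs.ne'
    have h1 : Real.log (1+s) ≤ s := by
      have := Real.log_le_sub_one_of_pos (show (0:ℝ) < 1+s by positivity)
      linarith
    rw [hLdef]
    linarith [hcle, hlogd ▸ hcle]
  -- numeric bound on exponential terms
  have hA : 1/2 ≤ s * Real.cosh c := by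
    have h1 : Real.sinh c ≤ Real.cosh c := by
      nlinarith [Real.cosh_sub_sinh c, Real.exp_pos (-c)]
    rw [hsc] at h1
    calc (1:ℝ)/2 = s * (1/(2*s)) := by field_simp
      _ ≤ s * Real.cosh c := by nlinarith
  have hB : s * Real.cosh c' ≤ s * Real.cosh c + 1/2 := by
    have e1 : (s * Real.cosh c)^2 = 1/4 + s^2 := by
      rw [mul_pow, Real.cosh_sq, hsc]; field_simp; ring
    have e2 : (s * Real.cosh c')^2 = 1 + s^2 := by
      rw [mul_pow, Real.cosh_sq, hsc']; field_simp
    have hp' : 0 < s * Real.cosh c' := by positivity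
    linarith [aux_B (s * Real.cosh c) (s * Real.cosh c') s hs e1 e2 hA hp']
  have hEA : Real.exp (-s * Real.cosh c) ≤ Real.exp (-(1/2)) :=
    Real.exp_le_exp.mpr (by linarith)
  have hEB : Real.exp (-s * Real.cosh c) * Real.exp (-(1/2)) ≤ Real.exp (-s * Real.cosh c') := by
    rw [← Real.exp_add]
    exact Real.exp_le_exp.mpr (by linarith)
  set u : ℝ := Real.exp (-(1/2) : ℝ) with hudef
  have hu0 : 0 < u := Real.exp_pos _
  have hu1 : u ≤ 1 := by
    rw [hudef]
    calc Real.exp (-(1/2):ℝ) ≤ Real.exp 0 := Real.exp_le_exp.mpr (by norm_num)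
      _ = 1 := Real.exp_zero
  have hq : 2 * Real.exp (-s * Real.cosh c) - Real.exp (-s * Real.cosh c')
      ≤ 2 * u - u^2 :=
    aux_q _ _ _ (Real.exp_pos _) hEA hu1 hEB
  have hqnum : 2 * u - u^2 ≤ 0.8454 := aux_qnum u hu0.le aux_unum
  -- conclusion
  rw [hsplit1, hsplit2, habs]
  have hctot : c * Real.exp (-s) + (2 * u - u^2) ≤ 1 + a := by
    rcases le_or_gt s (1/2) with hcase | hcase
    · -- small s : use c ≤ L + s, exp(-s) ≤ 1/(1+s), L ≤ a, log 2 ≤ L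
      have hL2 : Real.log 2 ≤ L := by
        have h2i : (2:ℝ) ≤ s⁻¹ := by
          rw [← one_div, le_div_iff₀ hs]; linarith
        have := (Real.log_le_log_iff (by norm_num) (by positivity)).mpr h2i
        rw [Real.log_inv] at this
        rw [hLdef]; linarith
      have hL29 : (0.6931471803:ℝ) ≤ L := le_trans Real.log_two_gt_d9.le hL2
      have hexpinv : Real.exp (-s) * (1 + s) ≤ 1 := by
        have h1 : s + 1 ≤ Real.exp s := Real.add_one_le_exp s
        have h2 : Real.exp s * Real.exp (-s) = 1 := by rw [← Real.exp_add]; simp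
        nlinarith [Real.exp_pos (-s)]
      have hce : c * Real.exp (-s) * (1 + s) ≤ L + s := by
        have h1 : c * Real.exp (-s) * (1 + s) ≤ c * 1 := by
          have := mul_le_mul_of_nonneg_left hexpinv hcpos.le
          calc c * Real.exp (-s) * (1+s) = c * (Real.exp (-s) * (1+s)) := by ring
            _ ≤ c * 1 := this
        linarith [hcLs]
      -- want: c * exp(-s) + q ≤ 1 + a  where q ≤ 0.8454, a ≥ L
      have hkey : (L + s) / (1 + s) + 0.8454 ≤ 1 + L := aux_key s L hs hcase hL29
      have hcediv : c * Real.exp (-s) ≤ (L + s) / (1 + s) := by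
        rw [le_div_iff₀ (by positivity : (0:ℝ) < 1+s)]
        exact hce
      linarith [hqnum, hLa]
    · -- large s : c ≤ 1, so c * exp(-s) ≤ exp(-s) ≤ a, and q ≤ 1
      have hc1 : c ≤ 1 := by
        have h1 : c < Real.sinh c := Real.self_lt_sinh_iff.mpr hcpos
        rw [hsc] at h1
        have h2 : 1/(2*s) ≤ 1 := by
          rw [div_le_one (by positivity)]; linarith
        linarith
      have hce : c * Real.exp (-s) ≤ a := by
        have h1 : c * Real.exp (-s) ≤ Real.exp (-s) := by
          nlinarith [Real.exp_pos (-s), hcpos]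
        linarith [he_a]
      have hq1 : 2 * u - u^2 ≤ 1 := by nlinarith [sq_nonneg (1 - u)]
      linarith
  linarith [hbound1, hbound2, hbound3, hq]
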